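/- With ε-JL keys and the delta-rule update starting from W⁽⁰⁾ = 0, the coefficients satisfy γ_{i,j}^{(t)} = 1[(k_i, v_j) has occurred and is the 'current' diagonal entry, i.e., i = j and key i has appeared] + Δ_{i,j}^{(t)} with |Δ_{i,j}^{(t)}| ≤ Σ_{a=1}^{t} ((m−1)ε)^a for all t ≥ 0 and all i, j ∈ {1,…,m}. -/

import Mathlib

open Matrix

open Classical in
lemma sum_smul_vmv_apply {d m : ℕ} (k v : Fin m → Fin d → ℝ) (c : Fin m → Fin m → ℝ)
    (a b : Fin d) :
    (∑ i : Fin m, ∑ j : Fin m, c i j • Matrix.vecMulVec (k i) (v j)) a b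
      = ∑ i : Fin m, ∑ j : Fin m, c i j * (k i a * v j b) := by
  simp [Matrix.sum_apply, Matrix.vecMulVec_apply]

lemma helperB {d m : ℕ} (k v : Fin m → Fin d → ℝ) (ℓ : Fin m) :
    Matrix.vecMulVec (k ℓ) (v ℓ) =
      ∑ i : Fin m, ∑ j : Fin m,
        (if i = ℓ ∧ j = ℓ then (1:ℝ) else 0) • Matrix.vecMulVec (k i) (v j) := by
  ext a b
  rw [sum_smul_vmv_apply]
  simp [ite_and, Finset.sum_ite_eq', Matrix.vecMulVec_apply]

lemma helperA {d m : ℕ} (k v : Fin m → Fin d → ℝ) (ℓ : Fin m) (γ : Fin m → Fin m → ℝ)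
    (W : Matrix (Fin d) (Fin d) ℝ)
    (hγ : W = ∑ i : Fin m, ∑ j : Fin m, γ i j • Matrix.vecMulVec (k i) (v j)) :
    Matrix.vecMulVec (k ℓ) (Matrix.vecMul (k ℓ) W) =
      ∑ i : Fin m, ∑ j : Fin m,
        (if i = ℓ then ∑ p : Fin m, (k ℓ ⬝ᵥ k p) * γ p j else 0) •
          Matrix.vecMulVec (k i) (v j) := by
  ext a b
  rw [sum_smul_vmv_apply]
  have hW : ∀ a' b', W a' b' = ∑ p : Fin m, ∑ j : Fin m, γ p j * (k p a' * v j b') := by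
    intro a' b'; rw [hγ, sum_smul_vmv_apply]
  simp only [Matrix.vecMulVec_apply, Matrix.vecMul, dotProduct, ite_mul, zero_mul,
    Finset.sum_ite_eq', Finset.mem_univ, if_true]
  -- goal: k ℓ a * ∑ a', k ℓ a' * W a' b = ∑ j, (∑ p, (∑ a', k ℓ a' * k p a') * γ p j) * (k ℓ a * v j b)
  simp only [hW]
  conv_rhs => rw [Finset.sum_comm]
  simp only [Finset.sum_ite_eq', Finset.mem_univ, if_true]
  simp only [Finset.mul_sum, Finset.sum_mul]
  conv_lhs => rw [Finset.sum_comm]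
  conv_rhs => rw [Finset.sum_comm]
  refine Finset.sum_congr rfl fun p _ => ?_
  rw [Finset.sum_comm]
  refine Finset.sum_congr rfl fun j _ => ?_
  refine Finset.sum_congr rfl fun x _ => ?_
  ring

lemma uniq {d m : ℕ} {k v : Fin m → Fin d → ℝ}
    (hk : LinearIndependent ℝ k) (hv : LinearIndependent ℝ v)
    (c : Fin m → Fin m → ℝ)
    (h : ∑ i : Fin m, ∑ j : Fin m, c i j • Matrix.vecMulVec (k i) (v j) = 0) :
    ∀ i j, c i j = 0 := by
  have hk' := Fintype.linearIndependent_iff.mp hk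
  have hv' := Fintype.linearIndependent_iff.mp hv
  have key : ∀ (b : Fin d) (i : Fin m), ∑ jj : Fin m, c i jj * v jj b = 0 := by
    intro b
    apply hk' (fun i => ∑ jj : Fin m, c i jj * v jj b)
    funext a
    have h2 := congrFun (congrFun h a) b
    rw [sum_smul_vmv_apply] at h2
    simp only [Matrix.zero_apply] at h2
    simp only [Finset.sum_apply, Pi.smul_apply, smul_eq_mul, Pi.zero_apply]
    rw [← h2]
    refine Finset.sum_congr rfl fun i _ => ?_
    rw [Finset.sum_mul]
    exact Finset.sum_congr rfl fun j _ => by ring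
  intro i j
  refine hv' (fun jj => c i jj) ?_ j
  funext b
  simpa using key b i

lemma recur {d m : ℕ} {k v : Fin m → Fin d → ℝ}
    (hk : LinearIndependent ℝ k) (hv : LinearIndependent ℝ v)
    (ℓ : Fin m) (γ γ' : Fin m → Fin m → ℝ) (W W' : Matrix (Fin d) (Fin d) ℝ)
    (hstep : W' = W - Matrix.vecMulVec (k ℓ) (Matrix.vecMul (k ℓ) W)
        + Matrix.vecMulVec (k ℓ) (v ℓ))
    (hγ : W = ∑ i : Fin m, ∑ j : Fin m, γ i j • Matrix.vecMulVec (k i) (v j))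
    (hγ' : W' = ∑ i : Fin m, ∑ j : Fin m, γ' i j • Matrix.vecMulVec (k i) (v j)) :
    ∀ i j, γ' i j = γ i j - (if i = ℓ then ∑ p : Fin m, (k ℓ ⬝ᵥ k p) * γ p j else 0)
      + (if i = ℓ ∧ j = ℓ then (1:ℝ) else 0) := by
  intro i j
  have h0 : ∑ i : Fin m, ∑ j : Fin m,
      (γ' i j - (γ i j - (if i = ℓ then ∑ p : Fin m, (k ℓ ⬝ᵥ k p) * γ p j else 0)
        + (if i = ℓ ∧ j = ℓ then (1:ℝ) else 0))) • Matrix.vecMulVec (k i) (v j) = 0 := by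
    simp only [sub_smul, add_smul, Finset.sum_sub_distrib, Finset.sum_add_distrib]
    rw [← hγ', ← hγ, ← helperA k v ℓ γ W hγ, ← helperB k v ℓ]
    rw [hstep]
    abel
  have := uniq hk hv _ h0 i j
  linarith

lemma geomB (x : ℝ) : ∀ t : ℕ,
    x * ((∑ a ∈ Finset.Icc 1 t, x ^ a) + 1) = ∑ a ∈ Finset.Icc 1 (t + 1), x ^ a := by
  intro t
  induction t with
  | zero => simp
  | succ t ih =>
    rw [Finset.sum_Icc_succ_top (by omega : 1 ≤ t + 1),
        Finset.sum_Icc_succ_top (by omega : 1 ≤ t + 1 + 1), ← ih]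
    ring

/-- Error bound for the delta-rule coefficients with ε-JL keys:
`γᵢⱼ⁽ᵗ⁾ = 1[i = j and key i has appeared] + Δᵢⱼ⁽ᵗ⁾` with
`|Δᵢⱼ⁽ᵗ⁾| ≤ Σ_{a=1}^{t} ((m−1)ε)^a`. -/
theorem stmt_9 (d m : ℕ) (k v : Fin m → Fin d → ℝ) (ε : ℝ) (hε : 0 ≤ ε)
    (hkk : ∀ i : Fin m, k i ⬝ᵥ k i = 1)
    (hkε : ∀ i j : Fin m, i ≠ j → |k i ⬝ᵥ k j| ≤ ε)
    (hk : LinearIndependent ℝ k) (hv : LinearIndependent ℝ v)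
    (σ : ℕ → Fin m) (W : ℕ → Matrix (Fin d) (Fin d) ℝ)
    (hW0 : W 0 = 0)
    (hWs : ∀ t : ℕ, W (t + 1) =
      W t - Matrix.vecMulVec (k (σ t)) (Matrix.vecMul (k (σ t)) (W t))
          + Matrix.vecMulVec (k (σ t)) (v (σ t)))
    (γ : ℕ → Fin m → Fin m → ℝ)
    (hγ : ∀ t : ℕ, W t = ∑ i : Fin m, ∑ j : Fin m,
      γ t i j • Matrix.vecMulVec (k i) (v j)) :
    ∀ (t : ℕ) (i j : Fin m),
      |γ t i j - (if i = j ∧ (∃ s < t, σ s = i) then (1 : ℝ) else 0)|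
        ≤ ∑ a ∈ Finset.Icc 1 t, (((m : ℝ) - 1) * ε) ^ a := by
  intro t
  induction t with
  | zero =>
    intro i j
    have h0 : γ 0 i j = 0 := uniq hk hv _ (by rw [← hγ 0, hW0]) i j
    simp [h0]
  | succ t ih =>
    intro i j
    have hm : (1 : ℝ) ≤ (m : ℝ) := by
      have := i.isLt; exact_mod_cast Nat.one_le_iff_ne_zero.mpr (by omega)
    set x : ℝ := ((m : ℝ) - 1) * ε with hxdef
    have hx : 0 ≤ x := mul_nonneg (by linarith) hε
    have hrec := recur hk hv (σ t) (γ t) (γ (t + 1)) (W t) (W (t + 1))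
      (hWs t) (hγ t) (hγ (t + 1)) i j
    have hγbound : ∀ p, |γ t p j| ≤ (∑ a ∈ Finset.Icc 1 t, x ^ a) + 1 := by
      intro p
      have h1 := ih p j
      have h2 : |(if p = j ∧ (∃ s < t, σ s = p) then (1 : ℝ) else 0)| ≤ 1 := by
        split <;> simp
      have h3 : |γ t p j| ≤ |γ t p j - (if p = j ∧ (∃ s < t, σ s = p) then (1:ℝ) else 0)|
          + |(if p = j ∧ (∃ s < t, σ s = p) then (1:ℝ) else 0)| := by
        have h4 := abs_add_le (γ t p j - (if p = j ∧ (∃ s < t, σ s = p) then (1:ℝ) else 0))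
          (if p = j ∧ (∃ s < t, σ s = p) then (1:ℝ) else 0)
        simpa using h4
      linarith
    by_cases hil : i = σ t
    · subst hil
      have hrec' : γ (t + 1) (σ t) j = γ t (σ t) j
          - ∑ p : Fin m, (k (σ t) ⬝ᵥ k p) * γ t p j
          + (if j = (σ t) then (1:ℝ) else 0) := by
        simpa [and_comm] using hrec
      have hsplit : ∑ p : Fin m, (k (σ t) ⬝ᵥ k p) * γ t p j
          = (∑ p ∈ Finset.univ.erase (σ t), (k (σ t) ⬝ᵥ k p) * γ t p j) + γ t (σ t) j := by
        rw [← Finset.sum_erase_add Finset.univ _ (Finset.mem_univ (σ t)), hkk, one_mul]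
      have hE : (if (σ t) = j ∧ (∃ s < t + 1, σ s = (σ t)) then (1:ℝ) else 0)
          = (if j = (σ t) then (1:ℝ) else 0) := by
        have hex : (∃ s < t + 1, σ s = (σ t)) := ⟨t, Nat.lt_succ_self t, rfl⟩
        by_cases h : j = (σ t)
        · subst h; rw [if_pos ⟨rfl, hex⟩, if_pos rfl]
        · have h' : ¬ ((σ t) = j) := fun hh => h hh.symm
          simp [h, h']
      have hΔ : γ (t + 1) (σ t) j - (if (σ t) = j ∧ (∃ s < t + 1, σ s = (σ t)) then (1:ℝ) else 0)
          = -(∑ p ∈ Finset.univ.erase (σ t), (k (σ t) ⬝ᵥ k p) * γ t p j) := by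
        rw [hE, hrec', hsplit]; ring
      rw [hΔ, abs_neg]
      calc |∑ p ∈ Finset.univ.erase (σ t), (k (σ t) ⬝ᵥ k p) * γ t p j|
          ≤ ∑ p ∈ Finset.univ.erase (σ t), |(k (σ t) ⬝ᵥ k p) * γ t p j| :=
            Finset.abs_sum_le_sum_abs _ _
        _ ≤ ∑ p ∈ Finset.univ.erase (σ t), ε * ((∑ a ∈ Finset.Icc 1 t, x ^ a) + 1) := by
            refine Finset.sum_le_sum fun p hp => ?_
            rw [abs_mul]
            have hp' : p ≠ (σ t) := Finset.ne_of_mem_erase hp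
            exact mul_le_mul (hkε (σ t) p (Ne.symm hp')) (hγbound p) (abs_nonneg _) hε
        _ = ((m : ℝ) - 1) * (ε * ((∑ a ∈ Finset.Icc 1 t, x ^ a) + 1)) := by
            rw [Finset.sum_const, nsmul_eq_mul, Finset.card_erase_of_mem (Finset.mem_univ (σ t)),
              Finset.card_univ, Fintype.card_fin]
            have hm1 : 1 ≤ m := by exact_mod_cast hm
            rw [Nat.cast_sub hm1]
            norm_num
        _ = ∑ a ∈ Finset.Icc 1 (t + 1), x ^ a := by
            rw [← geomB x t, hxdef]; ring
    · have hrec' : γ (t + 1) i j = γ t i j := by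
        simp [hil] at hrec
        exact hrec
      have hEx : (∃ s < t + 1, σ s = i) ↔ (∃ s < t, σ s = i) := by
        constructor
        · rintro ⟨s, hs, rfl⟩
          rcases Nat.lt_succ_iff_lt_or_eq.mp hs with h | h
          · exact ⟨s, h, rfl⟩
          · exact absurd rfl (h ▸ hil)
        · rintro ⟨s, hs, rfl⟩; exact ⟨s, Nat.lt_succ_of_lt hs, rfl⟩
      have hle : (∑ a ∈ Finset.Icc 1 t, x ^ a) ≤ ∑ a ∈ Finset.Icc 1 (t + 1), x ^ a := by
        rw [Finset.sum_Icc_succ_top (by omega : 1 ≤ t + 1)]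
        have := pow_nonneg hx (t + 1)
        linarith
      calc |γ (t + 1) i j - (if i = j ∧ (∃ s < t + 1, σ s = i) then (1:ℝ) else 0)|
          = |γ t i j - (if i = j ∧ (∃ s < t, σ s = i) then (1:ℝ) else 0)| := by
            rw [hrec']
            congr 1
            simp only [hEx]
        _ ≤ ∑ a ∈ Finset.Icc 1 t, x ^ a := ih i j
        _ ≤ _ := hle
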